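/- Let H be an abelian group and (G, G⁺) an ordered abelian group with G⁺ ∩ (−G⁺) = {0}. Set G♯ = H ⊕ G with positive cone G♯⁺ = {(h, g) : g ∈ G⁺ \ {0}} ∪ {0}, and let v = (w, 1) for some w ∈ H where 1 ∈ G⁺ \ {0}. If φ : G♯ → ℝ is a positive homomorphism with φ(v) = 1, then φ(h, 0) = 0 for all h ∈ H; consequently φ factors through the projection p : G♯ → G, i.e., there is a positive homomorphism ψ : G → ℝ with ψ(g) = φ(h, g) for any h. -/

import Mathlib

lemma arch_aux (a : ℝ) (h1 : ∀ n : ℕ, 0 ≤ n * a + 1) (h2 : ∀ n : ℕ, 0 ≤ n * (-a) + 1) :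
    a = 0 := by
  rcases lt_trichotomy a 0 with hlt | he | hgt
  · obtain ⟨n, hn⟩ := exists_nat_gt (1 / (-a))
    have : (1:ℝ) < n * (-a) := by
      rw [div_lt_iff₀ (by linarith)] at hn; linarith
    linarith [h1 n]
  · exact he
  · obtain ⟨n, hn⟩ := exists_nat_gt (1 / a)
    have : (1:ℝ) < n * a := by
      rw [div_lt_iff₀ hgt] at hn; linarith
    linarith [h2 n]

/-- With `G♯ = H ⊕ G`, cone `{(h,g) : g ∈ G⁺ \ {0}} ∪ {0}` and order unit
`v = (w, 1)`, any positive homomorphism `φ : H ⊕ G → ℝ` with `φ(v) = 1` vanishes on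
`H ⊕ 0` and factors through the projection to `G` as a positive homomorphism `ψ`. -/
theorem stmt_9 {H G : Type*} [AddCommGroup H] [AddCommGroup G]
    (Gpos : Set G) (hGpos : Gpos ∩ (-Gpos) = {0})
    (one : G) (hone : one ∈ Gpos) (hone0 : one ≠ 0)
    (cone : Set (H × G))
    (hcone : cone = {p | p.2 ∈ Gpos ∧ p.2 ≠ 0} ∪ {0})
    (w : H) (φ : H × G →+ ℝ)
    (hpos : ∀ p ∈ cone, 0 ≤ φ p)
    (hφv : φ (w, one) = 1) :
    (∀ h : H, φ (h, 0) = 0) ∧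
      ∃ ψ : G →+ ℝ, (∀ g ∈ Gpos, 0 ≤ ψ g) ∧ ∀ (h : H) (g : G), ψ g = φ (h, g) := by
  have key : ∀ h : H, φ (h, 0) = 0 := by
    intro h
    have hmem : ∀ h' : H, (h', one) ∈ cone := by
      intro h'; rw [hcone]; exact Or.inl ⟨hone, hone0⟩
    have step : ∀ (h' : H) (n : ℕ), 0 ≤ (n : ℝ) * φ (h', 0) + 1 := by
      intro h' n
      have := hpos _ (hmem (n • h' + w))
      have he : ((n • h' + w : H), one) = n • ((h', 0) : H × G) + (w, one) := by
        simp [Prod.ext_iff]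
      rw [he] at this
      simp only [map_add, map_nsmul, hφv, nsmul_eq_mul] at this
      exact this
    have h2 := step (-h)
    simp -failIfUnchanged only [map_neg] at *
    refine arch_aux _ (step h) ?_
    intro n
    have := step (-h) n
    have hneg : φ ((-h, 0) : H × G) = -φ ((h, 0) : H × G) := by
      have : ((-h, 0) : H × G) = -(h, 0) := by simp [Prod.ext_iff]
      rw [this, map_neg]
    rw [hneg] at this; exact this
  refine ⟨key, ⟨(φ.comp (AddMonoidHom.inr H G)), ?_, ?_⟩⟩
  · intro g hg
    rcases eq_or_ne g 0 with rfl | hg0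
    · exact (map_zero _).ge
    · exact hpos _ (by rw [hcone]; exact Or.inl ⟨hg, hg0⟩)
  · intro h g
    show φ (0, g) = φ (h, g)
    rw [show ((h, g) : H × G) = (h, 0) + (0, g) from by simp, map_add, key h, zero_add]
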